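/- arXiv:2402.05918 — 2 statements merged into one kernel-verified Lean document; each statement's English description precedes it below -/
import Mathlib

section
/- The transfer function M(s) = −(s + n − 1)/((s + 1)(s + n)), arising from perturbing the edge weight w_{12} in an unweighted star graph on n ≥ 2 nodes, satisfies: M(jω) is real negative only at ω = 0 (i.e., ω = 0 is the unique phase-crossover frequency), and the gain margin 1/|M(0)| equals n/(n − 1). -/
open Complex

/-- For `M(s) = -(s + n - 1)/((s + 1)(s + n))` with `n ≥ 2`: the only
phase-crossover frequency (`ω ≥ 0` with `M(jω)` real and negative) is `ω = 0`,
and the gain margin `1/|M(0)|` equals `n/(n - 1)`. -/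
theorem star_edge12_gain_margin
    (n : ℕ) (hn : 2 ≤ n)
    (M : ℂ → ℂ)
    (hM : ∀ s : ℂ, M s = -(s + (n : ℂ) - 1) / ((s + 1) * (s + (n : ℂ)))) :
    (∀ ω : ℝ, 0 ≤ ω →
      (M (ω * Complex.I)).im = 0 → (M (ω * Complex.I)).re < 0 → ω = 0) ∧
      1 / ‖M 0‖ = (n : ℝ) / ((n : ℝ) - 1) := by
  have hn2 : (2:ℝ) ≤ (n:ℝ) := by exact_mod_cast hn
  constructor
  · intro ω hω him _
    rw [hM] at him
    simp [Complex.div_im, Complex.normSq_apply, Complex.add_re, Complex.add_im,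
      Complex.mul_re, Complex.mul_im] at him
    by_contra hne
    have hωpos : 0 < ω := lt_of_le_of_ne hω (Ne.symm hne)
    rw [div_sub_div_same, div_eq_zero_iff] at him
    rcases him with him | him
    · nlinarith [mul_pos (mul_pos hωpos hωpos) hωpos,
        mul_pos hωpos (show (0:ℝ) < (n:ℝ)*(n:ℝ) - (n:ℝ) - 1 by nlinarith)]
    · have hp : 0 < ω + ω * (n:ℝ) := by nlinarith
      nlinarith [mul_pos hp hp, mul_self_nonneg ((n:ℝ) - ω*ω)]
  · rw [hM]
    have h1 : (0:ℂ) + (n:ℂ) - 1 = ((n:ℝ) - 1 : ℝ) := by push_cast; ring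
    have h2 : ((0:ℂ) + 1) * (0 + (n:ℂ)) = ((n:ℝ) : ℝ) := by push_cast; ring
    rw [show -((0:ℂ) + (n:ℂ) - 1) / ((0 + 1) * (0 + (n:ℂ)))
        = -(((n:ℝ) - 1 : ℝ) : ℂ) / (((n:ℝ) : ℝ) : ℂ) by rw [← h1, ← h2]]
    rw [norm_div, norm_neg, Complex.norm_real, Complex.norm_real, Real.norm_eq_abs, Real.norm_eq_abs,
      _root_.abs_of_nonneg (show (0:ℝ) ≤ (n:ℝ) - 1 by linarith),
      _root_.abs_of_nonneg (show (0:ℝ) ≤ (n:ℝ) by linarith), one_div_div]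
end

section
/- Suppose the error variables e_i satisfy ė = −L e, where L ∈ ℝ^{n×n} has a simple eigenvalue 0 with right eigenvector 1 and all other eigenvalues with strictly positive real part. Then e(t) converges to (pᵀe(0)/(pᵀ1))·1 as t → ∞, where p spans the null space of Lᵀ and pᵀ1 ≠ 0. -/
open Matrix Filter

section ConsensusAux

open Filter NormedSpace

open Filter NormedSpace

variable {E : Type*} [NormedAddCommGroup E] [NormedSpace ℂ E] [NormedSpace ℝ E]
  [IsScalarTower ℝ ℂ E] [CompleteSpace E]

/-- Solutions of the linear ODE `x' = -A x` are given by the matrix exponential. -/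
lemma ode_rep (A : E →L[ℂ] E) (x : ℝ → E)
    (hx : ∀ t, HasDerivAt x (-(A (x t))) t) (t : ℝ) :
    x t = NormedSpace.exp ((-(t : ℂ)) • A) (x 0) := by
  set ℓ : (E →L[ℂ] E) →L[ℝ] (E →L[ℝ] E) :=
    ContinuousLinearMap.restrictScalarsL ℂ E E ℝ ℝ with hℓ
  have key : ∀ s : ℝ, (NormedSpace.exp ((s : ℂ) • A)) (x s) = x 0 := by
    have hconst : ∀ s : ℝ, HasDerivAt (fun s : ℝ => (NormedSpace.exp ((s : ℂ) • A)) (x s)) 0 s := by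
      intro s
      have h1 : HasDerivAt (fun u : ℂ => NormedSpace.exp (u • A)) (NormedSpace.exp ((s : ℂ) • A) * A) (s : ℂ) :=
        hasDerivAt_exp_smul_const A (s : ℂ)
      have h0 : HasDerivAt (fun u : ℝ => (u : ℂ)) 1 s := by
        simpa using (hasDerivAt_id s).ofReal_comp
      have h2 : HasDerivAt (fun u : ℝ => NormedSpace.exp ((u : ℂ) • A)) (NormedSpace.exp ((s : ℂ) • A) * A) s := by
        have := h1.scomp s h0; simp only [one_smul] at this; exact this
      have h2' : HasDerivAt (fun u : ℝ => ℓ (NormedSpace.exp ((u : ℂ) • A)))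
          (ℓ (NormedSpace.exp ((s : ℂ) • A) * A)) s := ℓ.hasFDerivAt.comp_hasDerivAt s h2
      have h3 := h2'.clm_apply (hx s)
      have h4 : (ℓ (NormedSpace.exp ((s : ℂ) • A) * A)) (x s)
          + (ℓ (NormedSpace.exp ((s : ℂ) • A))) (-(A (x s))) = 0 := by
        simp [hℓ, ContinuousLinearMap.mul_apply]
      rw [h4] at h3
      exact h3.congr_deriv rfl |>.congr_of_eventuallyEq (by
        filter_upwards with u
        simp [hℓ])
    have hd : Differentiable ℝ (fun s : ℝ => (NormedSpace.exp ((s : ℂ) • A)) (x s)) :=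
      fun s => (hconst s).differentiableAt
    intro s
    have := is_const_of_deriv_eq_zero hd (fun s => (hconst s).deriv) s 0
    simpa using this
  have hcomm : Commute ((-(t : ℂ)) • A) ((t : ℂ) • A) :=
    ((Commute.refl A).smul_left _).smul_right _
  have hinv : NormedSpace.exp ((-(t : ℂ)) • A) * NormedSpace.exp ((t : ℂ) • A) = 1 := by
    rw [← NormedSpace.exp_add_of_commute_of_mem_ball (𝕂 := ℂ) hcomm ((NormedSpace.expSeries_radius_eq_top ℂ (E →L[ℂ] E)).symm ▸ edist_lt_top _ _) ((NormedSpace.expSeries_radius_eq_top ℂ (E →L[ℂ] E)).symm ▸ edist_lt_top _ _)]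
    have : (-(t : ℂ)) • A + (t : ℂ) • A = 0 := by
      rw [← add_smul]; simp
    rw [this, NormedSpace.exp_zero]
  calc x t = (NormedSpace.exp ((-(t : ℂ)) • A) * NormedSpace.exp ((t : ℂ) • A)) (x t) := by
        rw [hinv]; simp
    _ = NormedSpace.exp ((-(t : ℂ)) • A) (NormedSpace.exp ((t : ℂ) • A) (x t)) := rfl
    _ = NormedSpace.exp ((-(t : ℂ)) • A) (x 0) := by rw [key t]

/-- Action of the exponential on a generalized eigenvector. -/
lemma exp_apply_gen_eig (A : E →L[ℂ] E) (μ : ℂ) (k : ℕ) (v : E)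
    (hv : (((A - μ • (1 : E →L[ℂ] E))) ^ k) v = 0) (z : ℂ) :
    NormedSpace.exp (z • A) v = Complex.exp (z * μ) •
      ∑ j ∈ Finset.range k, ((z ^ j * (j.factorial : ℂ)⁻¹) •
        (((A - μ • (1 : E →L[ℂ] E)) ^ j) v)) := by
  set N : E →L[ℂ] E := A - μ • 1 with hN
  have hsplit : z • A = (z * μ) • (1 : E →L[ℂ] E) + z • N := by
    rw [hN, smul_sub, ← smul_smul]
    abel
  have hcomm : Commute ((z * μ) • (1 : E →L[ℂ] E)) (z • N) :=
    ((Commute.one_left N).smul_left _).smul_right _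
  have h1 : NormedSpace.exp (z • A) = NormedSpace.exp ((z * μ) • (1 : E →L[ℂ] E)) * NormedSpace.exp (z • N) := by
    rw [hsplit, NormedSpace.exp_add_of_commute_of_mem_ball (𝕂 := ℂ) hcomm ((NormedSpace.expSeries_radius_eq_top ℂ (E →L[ℂ] E)).symm ▸ edist_lt_top _ _) ((NormedSpace.expSeries_radius_eq_top ℂ (E →L[ℂ] E)).symm ▸ edist_lt_top _ _)]
  have h2 : NormedSpace.exp ((z * μ) • (1 : E →L[ℂ] E)) = Complex.exp (z * μ) • (1 : E →L[ℂ] E) := by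
    have : (z * μ) • (1 : E →L[ℂ] E) = algebraMap ℂ (E →L[ℂ] E) (z * μ) := by
      simp [Algebra.algebraMap_eq_smul_one]
    rw [this, ← algebraMap_exp_comm, ← Complex.exp_eq_exp_ℂ,
      Algebra.algebraMap_eq_smul_one]
  have h3 : NormedSpace.exp (z • N) v =
      ∑ j ∈ Finset.range k, ((z ^ j * (j.factorial : ℂ)⁻¹) • ((N ^ j) v)) := by
    have hsum : Summable fun n : ℕ => ((n.factorial : ℂ)⁻¹) • (z • N) ^ n :=
      expSeries_summable' (𝕂 := ℂ) (z • N)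
    have happ : NormedSpace.exp (z • N) v = ∑' n : ℕ, (((n.factorial : ℂ)⁻¹) • (z • N) ^ n) v := by
      rw [NormedSpace.exp_eq_tsum ℂ]
      exact ((ContinuousLinearMap.apply ℂ E v).map_tsum hsum)
    rw [happ]
    have hterm : ∀ n : ℕ, (((n.factorial : ℂ)⁻¹) • (z • N) ^ n) v
        = (z ^ n * (n.factorial : ℂ)⁻¹) • ((N ^ n) v) := by
      intro n
      rw [smul_pow]
      simp [smul_smul, mul_comm]
    have hzero : ∀ n ∉ Finset.range k, (((n.factorial : ℂ)⁻¹) • (z • N) ^ n) v = 0 := by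
      intro n hn
      rw [Finset.mem_range, not_lt] at hn
      rw [hterm n]
      have : (N ^ n) v = 0 := by
        have : N ^ n = N ^ (n - k) * N ^ k := by
          rw [← pow_add]; congr 1; omega
        rw [this, ContinuousLinearMap.mul_apply, hv, map_zero]
      rw [this, smul_zero]
    rw [tsum_eq_sum hzero]
    exact Finset.sum_congr rfl fun n _ => hterm n
  rw [h1, ContinuousLinearMap.mul_apply, h3, h2]
  simp only [ContinuousLinearMap.smul_apply, ContinuousLinearMap.one_apply, map_sum]
  rw [Finset.smul_sum]

lemma tendsto_aux {a : ℝ} (ha : 0 < a) (j : ℕ) :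
    Tendsto (fun t : ℝ => t ^ j * Real.exp (-(a * t))) atTop (nhds 0) := by
  have h := Real.tendsto_pow_mul_exp_neg_atTop_nhds_zero j
  have htop : Tendsto (fun t : ℝ => a * t) atTop atTop :=
    tendsto_id.const_mul_atTop ha
  have h2 := (h.comp htop).const_mul ((a ^ j)⁻¹)
  rw [mul_zero] at h2
  refine h2.congr fun t => ?_
  simp only [Function.comp_apply, mul_pow]
  field_simp

lemma tendsto_scalar_zero {μ : ℂ} (hμ : 0 < μ.re) (j : ℕ) (c : ℂ) :
    Tendsto (fun t : ℝ => Complex.exp ((-(t : ℂ)) * μ) * ((-(t : ℂ)) ^ j * c))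
      atTop (nhds 0) := by
  rw [tendsto_zero_iff_norm_tendsto_zero]
  have hg : Tendsto (fun t : ℝ => (t ^ j * Real.exp (-(μ.re * t))) * ‖c‖) atTop (nhds 0) := by
    simpa using (tendsto_aux hμ j).mul_const ‖c‖
  refine squeeze_zero' (Eventually.of_forall fun t => norm_nonneg _) ?_ hg
  filter_upwards [eventually_ge_atTop (0 : ℝ)] with t ht
  have hre : ((-(t : ℂ)) * μ).re = -(μ.re * t) := by
    simp [Complex.mul_re]
    ring
  rw [norm_mul, norm_mul, norm_pow, Complex.norm_exp, hre]
  simp only [norm_neg, Complex.norm_real, Real.norm_eq_abs, abs_of_nonneg ht]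
  ring_nf
  exact le_rfl

/-- Decay of the exponential on a generalized eigenvector whose eigenvalue has
positive real part. -/
lemma tendsto_exp_gen_eig (A : E →L[ℂ] E) {μ : ℂ} (hμ : 0 < μ.re) (k : ℕ) (v : E)
    (hv : (((A - μ • (1 : E →L[ℂ] E))) ^ k) v = 0) :
    Tendsto (fun t : ℝ => NormedSpace.exp ((-(t : ℂ)) • A) v) atTop (nhds 0) := by
  have hrw : ∀ t : ℝ, NormedSpace.exp ((-(t : ℂ)) • A) v =
      ∑ j ∈ Finset.range k,
        (Complex.exp ((-(t : ℂ)) * μ) * ((-(t : ℂ)) ^ j * (j.factorial : ℂ)⁻¹)) •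
          (((A - μ • (1 : E →L[ℂ] E)) ^ j) v) := by
    intro t
    rw [exp_apply_gen_eig A μ k v hv (-(t : ℂ)), Finset.smul_sum]
    exact Finset.sum_congr rfl fun j _ => by rw [smul_smul]
  simp only [hrw]
  have : (0 : E) = ∑ j ∈ Finset.range k, (0 : E) := by simp
  rw [this]
  refine tendsto_finset_sum _ fun j _ => ?_
  have := (tendsto_scalar_zero hμ j ((j.factorial : ℂ)⁻¹)).smul_const
    (((A - μ • (1 : E →L[ℂ] E)) ^ j) v)
  simpa using this

end ConsensusAux

set_option maxHeartbeats 1000000 in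
/-- If `L·1 = 0`, zero is an algebraically simple eigenvalue of `L`, and every
nonzero eigenvalue of `L` has strictly positive real part, then the solution of
`ė = −L e` converges to `(pᵀe(0)/(pᵀ1))·1`, where `Lᵀp = 0` and `pᵀ1 ≠ 0`. -/
theorem consensus_convergence
    {n : ℕ} (L : Matrix (Fin n) (Fin n) ℝ)
    (hL1 : L.mulVec (fun _ => (1 : ℝ)) = 0)
    (hsimple : ((L.map (Complex.ofReal)).charpoly).rootMultiplicity 0 = 1)
    (hspec : ∀ μ : ℂ, ((L.map (Complex.ofReal)).charpoly).IsRoot μ → μ ≠ 0 →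
      0 < μ.re)
    (p : Fin n → ℝ) (hp : Matrix.vecMul p L = 0) (hpne : p ≠ 0)
    (hp1 : (∑ i, p i) ≠ 0)
    (e : ℝ → Fin n → ℝ)
    (he : ∀ (i : Fin n) (t : ℝ),
      HasDerivAt (fun s => e s i) (-(L.mulVec (e t)) i) t) :
    Tendsto e atTop
      (nhds (fun _ => (∑ i, p i * e 0 i) / (∑ i, p i))) := by
  classical
  -- exclude `n = 0`
  have hn : n ≠ 0 := by
    rintro rfl
    have h1 : (L.map Complex.ofReal).charpoly = 1 := by
      simp [Matrix.charpoly, Matrix.det_fin_zero]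
    rw [h1] at hsimple
    have : ¬ (1 : Polynomial ℂ).IsRoot 0 := by simp [Polynomial.IsRoot]
    rw [Polynomial.rootMultiplicity_eq_zero this] at hsimple
    exact one_ne_zero hsimple.symm
  obtain ⟨m, rfl⟩ := Nat.exists_eq_succ_of_ne_zero hn
  set Lc : Matrix (Fin (m + 1)) (Fin (m + 1)) ℂ := L.map Complex.ofReal with hLcdef
  -- the endomorphism and continuous linear map versions of `Lc`
  set f : Module.End ℂ (Fin (m+1) → ℂ) := Matrix.toLinAlgEquiv' Lc with hfdef
  have hfapp : ∀ x : (Fin (m+1) → ℂ), f x = Lc.mulVec x := fun x => Matrix.toLinAlgEquiv'_apply Lc x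
  set A : (Fin (m+1) → ℂ) →L[ℂ] (Fin (m+1) → ℂ) := LinearMap.toContinuousLinearMap (f : (Fin (m+1) → ℂ) →ₗ[ℂ] (Fin (m+1) → ℂ)) with hAdef
  have hAapp : ∀ x : (Fin (m+1) → ℂ), A x = f x := fun x => rfl
  -- powers agree
  have hpow : ∀ (μ : ℂ) (k : ℕ) (x : (Fin (m+1) → ℂ)),
      (((A - μ • (1 : (Fin (m+1) → ℂ) →L[ℂ] (Fin (m+1) → ℂ))) ^ k) x) = (((f - μ • (1 : Module.End ℂ (Fin (m+1) → ℂ))) ^ k) x) := by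
    intro μ k
    induction k with
    | zero => intro x; simp
    | succ k ih =>
      intro x
      rw [pow_succ, pow_succ, ContinuousLinearMap.mul_apply, Module.End.mul_apply]
      have hx : ((A - μ • (1 : (Fin (m+1) → ℂ) →L[ℂ] (Fin (m+1) → ℂ))) x) = ((f - μ • (1 : Module.End ℂ (Fin (m+1) → ℂ))) x) := by
        simp [hAapp]
      rw [hx, ih]
  -- the complexified solution
  set ec : ℝ → (Fin (m+1) → ℂ) := fun t i => ((e t i : ℂ)) with hecdef
  have hec : ∀ t : ℝ, HasDerivAt ec (-(A (ec t))) t := by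
    intro t
    rw [hasDerivAt_pi]
    intro i
    have h1 := (he i t).ofReal_comp
    have h2 : ((-(A (ec t))) i) = ((-(L.mulVec (e t)) i : ℝ) : ℂ) := by
      simp only [Pi.neg_apply, hAapp, hfapp, Complex.ofReal_neg]
      congr 1
      simp only [Matrix.mulVec, dotProduct, hLcdef, Matrix.map_apply, hecdef]
      push_cast
      rfl
    rw [h2]
    exact h1
  -- representation by the exponential
  have hrep : ∀ t : ℝ, ec t = NormedSpace.exp ((-(t : ℂ)) • A) (ec 0) :=
    ode_rep A ec hec
  -- spectral decomposition of the initial datum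
  have htop := Module.End.iSup_maxGenEigenspace_eq_top f
  obtain ⟨cβ, hmem, hsum⟩ :=
    (Submodule.mem_iSup_iff_exists_finsupp _ (ec 0)).mp
      (by rw [htop]; trivial)
  -- charpoly facts
  have hcharf : LinearMap.charpoly (f : (Fin (m+1) → ℂ) →ₗ[ℂ] (Fin (m+1) → ℂ)) = Lc.charpoly := by
    rw [← LinearMap.charpoly_toMatrix (f : (Fin (m+1) → ℂ) →ₗ[ℂ] (Fin (m+1) → ℂ)) (Pi.basisFun ℂ (Fin (m + 1))),
      LinearMap.toMatrix_eq_toMatrix']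
    congr 1
    exact LinearMap.toMatrixAlgEquiv'_toLinAlgEquiv' Lc
  have haev : Polynomial.aeval f Lc.charpoly = 0 := by
    rw [hfdef, Polynomial.aeval_algHom_apply (Matrix.toLinAlgEquiv' (n := Fin (m+1)) (R := ℂ)) Lc
      Lc.charpoly, Matrix.aeval_self_charpoly, map_zero]
  have hmindvd : minpoly ℂ f ∣ Lc.charpoly := minpoly.dvd ℂ f haev
  -- the generalized eigenspace of 0 is spanned by the all-ones vector
  have h1c : Lc.mulVec (fun _ => (1 : ℂ)) = 0 := by
    ext i
    have h1r := congrFun hL1 i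
    simp only [Matrix.mulVec, dotProduct, mul_one, Pi.zero_apply] at h1r ⊢
    simp only [hLcdef, Matrix.map_apply]
    exact_mod_cast h1r
  have hone_ne : (fun _ => (1 : ℂ)) ≠ (0 : (Fin (m+1) → ℂ)) := by
    intro h
    exact one_ne_zero (congrFun h 0)
  have hone_mem : (fun _ => (1 : ℂ)) ∈ f.maxGenEigenspace 0 := by
    rw [Module.End.mem_maxGenEigenspace]
    exact ⟨1, by simp [hfapp, h1c]⟩
  have hspan : Submodule.span ℂ {(fun _ => (1 : ℂ) : (Fin (m+1) → ℂ))} = f.maxGenEigenspace 0 := by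
    apply Submodule.eq_of_le_of_finrank_le
    · rw [Submodule.span_le, Set.singleton_subset_iff]; exact hone_mem
    · rw [LinearMap.finrank_maxGenEigenspace_eq, hcharf,
        hsimple,
        finrank_span_singleton hone_ne]
  obtain ⟨a, ha⟩ := Submodule.mem_span_singleton.mp (hspan ▸ hmem 0)
  -- dual vector facts
  set pc : Fin (m + 1) → ℂ := fun i => ((p i : ℂ)) with hpcdef
  have hpL : Matrix.vecMul pc Lc = 0 := by
    ext j
    have hr := congrFun hp j
    simp only [Matrix.vecMul, dotProduct, Pi.zero_apply] at hr ⊢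
    simp only [hLcdef, hpcdef, Matrix.map_apply]
    exact_mod_cast hr
  have hdotf : ∀ x : (Fin (m+1) → ℂ), pc ⬝ᵥ (f x) = 0 := by
    intro x
    rw [hfapp, dotProduct_mulVec, hpL, zero_dotProduct]
  have hdotPow : ∀ (μ : ℂ) (k : ℕ) (x : (Fin (m+1) → ℂ)),
      pc ⬝ᵥ (((f - μ • (1 : Module.End ℂ (Fin (m+1) → ℂ))) ^ k) x) = (-μ) ^ k * (pc ⬝ᵥ x) := by
    intro μ k
    induction k with
    | zero => intro x; simp
    | succ k ih =>
      intro x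
      rw [pow_succ, Module.End.mul_apply, ih]
      have : ((f - μ • (1 : Module.End ℂ (Fin (m+1) → ℂ))) x) = f x - μ • x := by simp
      rw [this, dotProduct_sub, hdotf, dotProduct_smul, pow_succ]
      ring_nf
  have hdot0 : ∀ μ : ℂ, μ ≠ 0 → pc ⬝ᵥ cβ μ = 0 := by
    intro μ hμ
    obtain ⟨k, hk⟩ := (Module.End.mem_maxGenEigenspace f μ (cβ μ)).mp (hmem μ)
    have := hdotPow μ k (cβ μ)
    rw [hk] at this
    simp only [dotProduct_zero] at this
    have hne : (-μ) ^ k ≠ 0 := pow_ne_zero _ (neg_ne_zero.mpr hμ)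
    rcases mul_eq_zero.mp this.symm with h | h
    · exact absurd h hne
    · exact h
  have hdot_sum : ∀ (s : Finset ℂ) (w : ℂ → (Fin (m+1) → ℂ)),
      pc ⬝ᵥ (∑ μ ∈ s, w μ) = ∑ μ ∈ s, pc ⬝ᵥ (w μ) := by
    intro s w
    simp only [dotProduct, Finset.sum_apply, Finset.mul_sum]
    exact Finset.sum_comm
  -- value of the projection
  have hval : pc ⬝ᵥ ec 0 = a * (∑ i, pc i) := by
    have h1 : pc ⬝ᵥ ec 0 = ∑ μ ∈ cβ.support, pc ⬝ᵥ cβ μ := by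
      rw [← hsum, Finsupp.sum, hdot_sum]
    rw [h1, Finset.sum_eq_single 0 (fun μ _ hμ => hdot0 μ hμ)
      (fun h0 => by rw [Finsupp.notMem_support_iff.mp h0, dotProduct_zero]), ← ha]
    simp only [dotProduct, Pi.smul_apply, smul_eq_mul, mul_one, Finset.mul_sum]
    exact Finset.sum_congr rfl fun i _ => by ring
  -- identify `a`
  have hS : (∑ i, pc i) = ((∑ i, p i : ℝ) : ℂ) := by push_cast [hpcdef]; rfl
  have hT : pc ⬝ᵥ ec 0 = ((∑ i, p i * e 0 i : ℝ) : ℂ) := by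
    simp only [dotProduct, hpcdef, hecdef]
    push_cast
    rfl
  have hSne : ((∑ i, p i : ℝ) : ℂ) ≠ 0 := Complex.ofReal_ne_zero.mpr hp1
  have ha_val : a = (((∑ i, p i * e 0 i) / (∑ i, p i) : ℝ) : ℂ) := by
    have hmul : a * ((∑ i, p i : ℝ) : ℂ) = ((∑ i, p i * e 0 i : ℝ) : ℂ) := by
      rw [← hS, ← hval, hT]
    rw [Complex.ofReal_div, eq_div_iff hSne, hmul]
  -- convergence of each generalized eigencomponent
  have hcomp : ∀ μ ∈ cβ.support,
      Tendsto (fun t : ℝ => NormedSpace.exp ((-(t : ℂ)) • A) (cβ μ)) atTop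
        (nhds (if μ = 0 then cβ 0 else 0)) := by
    intro μ hμs
    by_cases hμ0 : μ = 0
    · subst hμ0
      simp only [if_pos rfl]
      have hfix : ∀ t : ℝ, NormedSpace.exp ((-(t : ℂ)) • A) (cβ 0) = cβ 0 := by
        intro t
        have hv : (((A - (0 : ℂ) • (1 : (Fin (m+1) → ℂ) →L[ℂ] (Fin (m+1) → ℂ)))) ^ 1) (cβ 0) = 0 := by
          rw [hpow]
          simp only [pow_one, zero_smul, sub_zero]
          rw [← ha, _root_.map_smul, hfapp, h1c, smul_zero]
        rw [exp_apply_gen_eig A 0 1 (cβ 0) hv (-(t : ℂ))]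
        simp only [mul_zero, Complex.exp_zero, Finset.range_one, Finset.sum_singleton,
          pow_zero, Nat.factorial_zero, Nat.cast_one, inv_one, one_mul, mul_one,
          ContinuousLinearMap.one_apply, one_smul]
      simp only [hfix]
      exact tendsto_const_nhds
    · simp only [if_neg hμ0]
      -- μ is a root of the characteristic polynomial
      have hcne : cβ μ ≠ 0 := Finsupp.mem_support_iff.mp hμs
      have hgen : f.HasGenEigenvalue μ (Module.End.maxGenEigenspaceIndex f μ) := by
        rw [Module.End.hasGenEigenvalue_iff]
        intro hbot
        apply hcne
        have := hmem μ
        rw [Module.End.maxGenEigenspace_eq, hbot] at this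
        simpa using this
      have heig : f.HasEigenvalue μ := Module.End.hasEigenvalue_of_hasGenEigenvalue hgen
      have hroot : Lc.charpoly.IsRoot μ :=
        (Module.End.isRoot_of_hasEigenvalue heig).dvd hmindvd
      have hre : 0 < μ.re := hspec μ hroot hμ0
      obtain ⟨k, hk⟩ := (Module.End.mem_maxGenEigenspace f μ (cβ μ)).mp (hmem μ)
      exact tendsto_exp_gen_eig A hre k (cβ μ) (by rw [hpow]; exact hk)
  -- assemble the limit
  have hlim : Tendsto ec atTop (nhds (cβ 0)) := by
    have h1 : ∀ t : ℝ, ec t = ∑ μ ∈ cβ.support, NormedSpace.exp ((-(t : ℂ)) • A) (cβ μ) := by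
      intro t
      rw [hrep t, ← hsum, Finsupp.sum, map_sum]
    have h2 : Tendsto (fun t : ℝ => ∑ μ ∈ cβ.support, NormedSpace.exp ((-(t : ℂ)) • A) (cβ μ))
        atTop (nhds (∑ μ ∈ cβ.support, if μ = 0 then cβ 0 else 0)) :=
      tendsto_finset_sum _ hcomp
    have h3 : (∑ μ ∈ cβ.support, if μ = 0 then cβ 0 else 0) = cβ 0 := by
      rw [Finset.sum_ite_eq' cβ.support (0 : ℂ) (fun _ => cβ 0)]
      by_cases h0 : (0 : ℂ) ∈ cβ.support
      · rw [if_pos h0]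
      · rw [if_neg h0, Finsupp.notMem_support_iff.mp h0]
    rw [h3] at h2
    simp only [← h1] at h2
    exact h2
  -- back to the real statement
  rw [tendsto_pi_nhds]
  intro i
  have hlim_i : Tendsto (fun t : ℝ => ec t i) atTop (nhds (cβ 0 i)) :=
    ((continuous_apply i).tendsto (cβ 0)).comp hlim
  have hlim_re : Tendsto (fun t : ℝ => (ec t i).re) atTop (nhds ((cβ 0 i).re)) :=
    (Complex.continuous_re.tendsto _).comp hlim_i
  have h4 : ∀ t : ℝ, (ec t i).re = e t i := fun t => Complex.ofReal_re _
  have h5 : (cβ 0 i).re = (∑ i, p i * e 0 i) / (∑ i, p i) := by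
    rw [← ha]
    simp only [Pi.smul_apply, smul_eq_mul, mul_one, ha_val]
    exact Complex.ofReal_re _
  simp only [h4, h5] at hlim_re
  exact hlim_re
end
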